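/- Superadditivity of ‖·‖_{p-TV}^p over intervals fails: for f : [−1,1] → ℝ given by f(t) = 1 for t ∈ (−1,1), f(−1) = 0, f(1) = −1, one has TV(f,[−1,0],δ) = (1−δ)₊, TV(f,[0,1],δ) = (2−δ)₊, TV(f,[−1,1],δ) = (1−δ)₊ + (2−δ)₊, and consequently ‖f‖_{2-TV,[−1,1]}² = 9/8 < ‖f‖_{2-TV,[−1,0]}² + ‖f‖_{2-TV,[0,1]}² = 1/4 + 1. -/

import Mathlib

open Set Filter Topology ENNReal

noncomputable def truncVar {E : Type*} [PseudoMetricSpace E] (f : ℝ → E) (a b δ : ℝ) : ℝ≥0∞ :=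
  ⨆ (n : ℕ) (t : Fin (n + 1) → ℝ) (_ : StrictMono t) (_ : ∀ i, t i ∈ Set.Icc a b),
    ENNReal.ofReal (∑ i : Fin n, max (dist (f (t i.succ)) (f (t i.castSucc)) - δ) 0)

def Regulated {E : Type*} [PseudoMetricSpace E] (f : ℝ → E) (a b : ℝ) : Prop :=
  (∀ t ∈ Set.Ico a b, ∃ L, Filter.Tendsto f (nhdsWithin t (Set.Ioi t)) (nhds L)) ∧
  (∀ t ∈ Set.Ioc a b, ∃ L, Filter.Tendsto f (nhdsWithin t (Set.Iio t)) (nhds L))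

noncomputable def badFun : ℝ → ℝ := fun t => if -1 < t ∧ t < 1 then 1 else if t = 1 then -1 else 0

lemma badFun_eq_one {t : ℝ} (h1 : -1 < t) (h2 : t < 1) : badFun t = 1 := by
  simp [badFun, h1, h2]

lemma badFun_neg_one : badFun (-1) = 0 := by norm_num [badFun]

lemma badFun_one : badFun (1:ℝ) = -1 := by norm_num [badFun]

lemma sum_ite_le {n : ℕ} (p : Fin n → Prop) [DecidablePred p]
    (h : ∀ i j, p i → p j → i = j) {c : ℝ} (hc : 0 ≤ c) :
    ∑ i, (if p i then c else 0) ≤ c := by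
  by_cases he : ∃ i, p i
  · obtain ⟨i, hi⟩ := he
    have heq : ∀ j ∈ Finset.univ, (if p j then c else 0) = if j = i then c else 0 := by
      intro j _
      by_cases hj : p j
      · rw [if_pos hj, if_pos (h j i hj hi)]
      · have : j ≠ i := fun hji => hj (hji ▸ hi)
        simp [hj, this]
    rw [Finset.sum_congr rfl heq, Finset.sum_ite_eq' Finset.univ i fun _ => c]
    simp
  · push_neg at he
    simp [he, hc]

-- upper bound sum for [-1,0]
lemma sum_le_left {n : ℕ} (t : Fin (n+1) → ℝ) (ht : StrictMono t)
    (hmem : ∀ i, t i ∈ Set.Icc (-1:ℝ) 0) {δ : ℝ} (hδ : 0 ≤ δ) :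
    ∑ i : Fin n, max (dist (badFun (t i.succ)) (badFun (t i.castSucc)) - δ) 0
      ≤ max (1 - δ) 0 := by
  have key : ∀ i : Fin n, max (dist (badFun (t i.succ)) (badFun (t i.castSucc)) - δ) 0
      ≤ if t i.castSucc = -1 then max (1-δ) 0 else 0 := by
    intro i
    have hlt : t i.castSucc < t i.succ := ht (Fin.castSucc_lt_succ : i.castSucc < i.succ)
    have ha := hmem i.castSucc
    have hb := hmem i.succ
    by_cases h : t i.castSucc = -1
    · rw [if_pos h]
      have hb1 : badFun (t i.succ) = 1 :=
        badFun_eq_one (h ▸ hlt) (lt_of_le_of_lt hb.2 one_pos)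
      rw [h, hb1, badFun_neg_one]
      have : dist (1:ℝ) 0 = 1 := by rw [Real.dist_eq]; norm_num
      rw [this]
    · rw [if_neg h]
      have ha1 : badFun (t i.castSucc) = 1 :=
        badFun_eq_one (lt_of_le_of_ne ha.1 (Ne.symm h)) (lt_of_le_of_lt ha.2 one_pos)
      have hb1 : badFun (t i.succ) = 1 :=
        badFun_eq_one (lt_of_lt_of_le (by linarith [ha.1, lt_of_le_of_ne ha.1 (Ne.symm h)] : (-1:ℝ) < t i.castSucc) hlt.le) (lt_of_le_of_lt hb.2 one_pos)
      rw [ha1, hb1, dist_self]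
      simp [hδ]
  refine le_trans (Finset.sum_le_sum fun i _ => key i) (sum_ite_le _ ?_ (le_max_right _ _))
  intro i j hi hj
  exact Fin.castSucc_injective _ (ht.injective (hi.trans hj.symm))

lemma dist_one_zero : dist (1:ℝ) 0 = 1 := by rw [Real.dist_eq]; norm_num
lemma dist_neg_one_one : dist (-1:ℝ) 1 = 2 := by rw [Real.dist_eq]; norm_num
lemma dist_neg_one_zero : dist (-1:ℝ) 0 = 1 := by rw [Real.dist_eq]; norm_num

lemma sum_le_right {n : ℕ} (t : Fin (n+1) → ℝ) (ht : StrictMono t)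
    (hmem : ∀ i, t i ∈ Set.Icc (0:ℝ) 1) {δ : ℝ} (hδ : 0 ≤ δ) :
    ∑ i : Fin n, max (dist (badFun (t i.succ)) (badFun (t i.castSucc)) - δ) 0
      ≤ max (2 - δ) 0 := by
  have key : ∀ i : Fin n, max (dist (badFun (t i.succ)) (badFun (t i.castSucc)) - δ) 0
      ≤ if t i.succ = 1 then max (2-δ) 0 else 0 := by
    intro i
    have hlt : t i.castSucc < t i.succ := ht (Fin.castSucc_lt_succ : i.castSucc < i.succ)
    have ha := hmem i.castSucc
    have hb := hmem i.succ
    have ha1 : badFun (t i.castSucc) = 1 :=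
      badFun_eq_one (by linarith [ha.1]) (lt_of_lt_of_le hlt hb.2)
    by_cases h : t i.succ = 1
    · rw [if_pos h, h, badFun_one, ha1, dist_neg_one_one]
    · rw [if_neg h]
      have hb1 : badFun (t i.succ) = 1 :=
        badFun_eq_one (by linarith [hb.1]) (lt_of_le_of_ne hb.2 h)
      rw [ha1, hb1, dist_self]
      simp [hδ]
  refine le_trans (Finset.sum_le_sum fun i _ => key i) (sum_ite_le _ ?_ (le_max_right _ _))
  intro i j hi hj
  exact Fin.succ_injective _ (ht.injective (hi.trans hj.symm))

lemma sum_le_both {n : ℕ} (t : Fin (n+1) → ℝ) (ht : StrictMono t)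
    (hmem : ∀ i, t i ∈ Set.Icc (-1:ℝ) 1) {δ : ℝ} (hδ : 0 ≤ δ) :
    ∑ i : Fin n, max (dist (badFun (t i.succ)) (badFun (t i.castSucc)) - δ) 0
      ≤ max (1 - δ) 0 + max (2 - δ) 0 := by
  have key : ∀ i : Fin n, max (dist (badFun (t i.succ)) (badFun (t i.castSucc)) - δ) 0
      ≤ (if t i.castSucc = -1 then max (1-δ) 0 else 0)
        + (if t i.succ = 1 then max (2-δ) 0 else 0) := by
    intro i
    have hlt : t i.castSucc < t i.succ := ht (Fin.castSucc_lt_succ : i.castSucc < i.succ)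
    have ha := hmem i.castSucc
    have hb := hmem i.succ
    by_cases h1 : t i.castSucc = -1
    · by_cases h2 : t i.succ = 1
      · rw [if_pos h1, if_pos h2, h1, h2, badFun_one, badFun_neg_one, dist_neg_one_zero]
        have : (0:ℝ) ≤ max (2-δ) 0 := le_max_right _ _
        linarith [le_max_left (1-δ) 0, le_max_right (1-δ) 0, max_le_max (le_refl (1-δ)) (le_refl (0:ℝ))]
      · rw [if_pos h1, if_neg h2]
        have hb1 : badFun (t i.succ) = 1 :=
          badFun_eq_one (h1 ▸ hlt) (lt_of_le_of_ne hb.2 h2)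
        rw [h1, hb1, badFun_neg_one, dist_one_zero]
        have : (0:ℝ) ≤ max (2-δ) 0 := le_max_right _ _
        linarith
    · have ha1 : badFun (t i.castSucc) = 1 :=
        badFun_eq_one (lt_of_le_of_ne ha.1 (Ne.symm h1)) (lt_of_lt_of_le hlt hb.2)
      by_cases h2 : t i.succ = 1
      · rw [if_neg h1, if_pos h2, h2, badFun_one, ha1, dist_neg_one_one]
        have : (0:ℝ) ≤ max (1-δ) 0 := le_max_right _ _
        simp only [zero_add]
        exact le_refl _
      · rw [if_neg h1, if_neg h2]
        have hb1 : badFun (t i.succ) = 1 := by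
          refine badFun_eq_one ?_ (lt_of_le_of_ne hb.2 h2)
          have : -1 < t i.castSucc := lt_of_le_of_ne ha.1 (Ne.symm h1)
          linarith
        rw [ha1, hb1, dist_self]
        simp [hδ]
  refine le_trans (Finset.sum_le_sum fun i _ => key i) ?_
  rw [Finset.sum_add_distrib]
  refine add_le_add (sum_ite_le _ ?_ (le_max_right _ _)) (sum_ite_le _ ?_ (le_max_right _ _))
  · intro i j hi hj
    exact Fin.castSucc_injective _ (ht.injective (hi.trans hj.symm))
  · intro i j hi hj
    exact Fin.succ_injective _ (ht.injective (hi.trans hj.symm))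


lemma truncVar_left {δ : ℝ} (hδ : 0 ≤ δ) :
    truncVar badFun (-1) 0 δ = ENNReal.ofReal (max (1 - δ) 0) := by
  apply le_antisymm
  · refine iSup_le fun n => iSup_le fun t => iSup_le fun ht => iSup_le fun hmem => ?_
    exact ENNReal.ofReal_le_ofReal (sum_le_left t ht hmem hδ)
  · have hmono : StrictMono (![(-1:ℝ), 0]) := by
      intro i j hij
      fin_cases i <;> fin_cases j <;> simp_all
    have hmem : ∀ i, (![(-1:ℝ), 0]) i ∈ Set.Icc (-1:ℝ) 0 := by
      intro i; fin_cases i <;> norm_num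
    have hsum : (∑ i : Fin 1, max (dist (badFun ((![(-1:ℝ), 0]) i.succ)) (badFun ((![(-1:ℝ), 0]) i.castSucc)) - δ) 0)
        = max (1 - δ) 0 := by
      simp only [Fin.sum_univ_one]
      have h1 : (![(-1:ℝ), 0]) (0:Fin 1).succ = 0 := by norm_num
      have h2 : (![(-1:ℝ), 0]) (0:Fin 1).castSucc = -1 := by norm_num
      rw [h1, h2, badFun_neg_one, badFun_eq_one (by norm_num) (by norm_num), dist_one_zero]
    calc ENNReal.ofReal (max (1 - δ) 0)
        = ENNReal.ofReal (∑ i : Fin 1, max (dist (badFun ((![(-1:ℝ), 0]) i.succ)) (badFun ((![(-1:ℝ), 0]) i.castSucc)) - δ) 0) := by rw [hsum]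
      _ ≤ truncVar badFun (-1) 0 δ :=
          le_iSup_of_le 1 (le_iSup_of_le ![(-1:ℝ), 0] (le_iSup_of_le hmono (le_iSup_of_le hmem le_rfl)))

lemma truncVar_right {δ : ℝ} (hδ : 0 ≤ δ) :
    truncVar badFun 0 1 δ = ENNReal.ofReal (max (2 - δ) 0) := by
  apply le_antisymm
  · refine iSup_le fun n => iSup_le fun t => iSup_le fun ht => iSup_le fun hmem => ?_
    exact ENNReal.ofReal_le_ofReal (sum_le_right t ht hmem hδ)
  · have hmono : StrictMono (![(0:ℝ), 1]) := by
      intro i j hij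
      fin_cases i <;> fin_cases j <;> simp_all
    have hmem : ∀ i, (![(0:ℝ), 1]) i ∈ Set.Icc (0:ℝ) 1 := by
      intro i; fin_cases i <;> norm_num
    have hsum : (∑ i : Fin 1, max (dist (badFun ((![(0:ℝ), 1]) i.succ)) (badFun ((![(0:ℝ), 1]) i.castSucc)) - δ) 0)
        = max (2 - δ) 0 := by
      simp only [Fin.sum_univ_one]
      have h1 : (![(0:ℝ), 1]) (0:Fin 1).succ = 1 := by norm_num
      have h2 : (![(0:ℝ), 1]) (0:Fin 1).castSucc = 0 := by norm_num
      rw [h1, h2, badFun_one, badFun_eq_one (by norm_num) (by norm_num), dist_neg_one_one]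
    calc ENNReal.ofReal (max (2 - δ) 0)
        = ENNReal.ofReal (∑ i : Fin 1, max (dist (badFun ((![(0:ℝ), 1]) i.succ)) (badFun ((![(0:ℝ), 1]) i.castSucc)) - δ) 0) := by rw [hsum]
      _ ≤ truncVar badFun 0 1 δ :=
          le_iSup_of_le 1 (le_iSup_of_le ![(0:ℝ), 1] (le_iSup_of_le hmono (le_iSup_of_le hmem le_rfl)))

lemma truncVar_both {δ : ℝ} (hδ : 0 ≤ δ) :
    truncVar badFun (-1) 1 δ = ENNReal.ofReal (max (1 - δ) 0 + max (2 - δ) 0) := by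
  apply le_antisymm
  · refine iSup_le fun n => iSup_le fun t => iSup_le fun ht => iSup_le fun hmem => ?_
    exact ENNReal.ofReal_le_ofReal (sum_le_both t ht hmem hδ)
  · have hmono : StrictMono (![(-1:ℝ), 0, 1]) := by
      intro i j hij
      fin_cases i <;> fin_cases j <;> simp_all
    have hmem : ∀ i, (![(-1:ℝ), 0, 1]) i ∈ Set.Icc (-1:ℝ) 1 := by
      intro i; fin_cases i <;> norm_num
    have hsum : (∑ i : Fin 2, max (dist (badFun ((![(-1:ℝ), 0, 1]) i.succ)) (badFun ((![(-1:ℝ), 0, 1]) i.castSucc)) - δ) 0)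
        = max (1 - δ) 0 + max (2 - δ) 0 := by
      rw [Fin.sum_univ_two]
      have h1 : (![(-1:ℝ), 0, 1]) (0:Fin 2).succ = 0 := by norm_num
      have h2 : (![(-1:ℝ), 0, 1]) (0:Fin 2).castSucc = -1 := by norm_num
      have h3 : (![(-1:ℝ), 0, 1]) (1:Fin 2).succ = 1 := by rfl
      have h4 : (![(-1:ℝ), 0, 1]) (1:Fin 2).castSucc = 0 := by norm_num
      rw [h1, h2, h3, h4, badFun_neg_one, badFun_one,
        badFun_eq_one (by norm_num) (by norm_num), dist_one_zero, dist_neg_one_one]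
    calc ENNReal.ofReal (max (1 - δ) 0 + max (2 - δ) 0)
        = ENNReal.ofReal (∑ i : Fin 2, max (dist (badFun ((![(-1:ℝ), 0, 1]) i.succ)) (badFun ((![(-1:ℝ), 0, 1]) i.castSucc)) - δ) 0) := by rw [hsum]
      _ ≤ truncVar badFun (-1) 1 δ :=
          le_iSup_of_le 2 (le_iSup_of_le ![(-1:ℝ), 0, 1] (le_iSup_of_le hmono (le_iSup_of_le hmem le_rfl)))

lemma sup_both :
    (⨆ (δ : ℝ) (_ : 0 < δ), ENNReal.ofReal δ * truncVar badFun (-1) 1 δ)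
      = ENNReal.ofReal (9 / 8) := by
  apply le_antisymm
  · refine iSup_le fun δ => iSup_le fun hδ => ?_
    rw [truncVar_both hδ.le, ← ENNReal.ofReal_mul hδ.le]
    apply ENNReal.ofReal_le_ofReal
    rcases le_or_gt δ 1 with h1 | h1
    · rw [max_eq_left (by linarith), max_eq_left (by linarith)]
      nlinarith [sq_nonneg (δ - 3/4)]
    · rcases le_or_gt δ 2 with h2 | h2
      · rw [max_eq_right (by linarith), max_eq_left (by linarith)]
        nlinarith [sq_nonneg (δ - 1)]
      · rw [max_eq_right (by linarith), max_eq_right (by linarith)]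
        nlinarith
  · have h : ENNReal.ofReal (9/8) = ENNReal.ofReal (3/4) * truncVar badFun (-1) 1 (3/4) := by
      rw [truncVar_both (by norm_num), ← ENNReal.ofReal_mul (by norm_num)]
      congr 1
      rw [show max (1-(3/4:ℝ)) 0 = 1/4 by norm_num, show max (2-(3/4:ℝ)) 0 = 5/4 by norm_num]
      norm_num
    rw [h]
    exact le_iSup_of_le (3/4) (le_iSup_of_le (by norm_num) le_rfl)

lemma sup_left :
    (⨆ (δ : ℝ) (_ : 0 < δ), ENNReal.ofReal δ * truncVar badFun (-1) 0 δ)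
      = ENNReal.ofReal (1 / 4) := by
  apply le_antisymm
  · refine iSup_le fun δ => iSup_le fun hδ => ?_
    rw [truncVar_left hδ.le, ← ENNReal.ofReal_mul hδ.le]
    apply ENNReal.ofReal_le_ofReal
    rcases le_or_gt δ 1 with h1 | h1
    · rw [max_eq_left (by linarith)]
      nlinarith [sq_nonneg (δ - 1/2)]
    · rw [max_eq_right (by linarith)]
      nlinarith
  · have h : ENNReal.ofReal (1/4) = ENNReal.ofReal (1/2) * truncVar badFun (-1) 0 (1/2) := by
      rw [truncVar_left (by norm_num), ← ENNReal.ofReal_mul (by norm_num)]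
      congr 1
      rw [show max (1-(1/2:ℝ)) 0 = 1/2 by norm_num]
      norm_num
    rw [h]
    exact le_iSup_of_le (1/2) (le_iSup_of_le (by norm_num) le_rfl)

lemma sup_right :
    (⨆ (δ : ℝ) (_ : 0 < δ), ENNReal.ofReal δ * truncVar badFun 0 1 δ) = 1 := by
  apply le_antisymm
  · refine iSup_le fun δ => iSup_le fun hδ => ?_
    rw [truncVar_right hδ.le, ← ENNReal.ofReal_mul hδ.le, ← ENNReal.ofReal_one]
    apply ENNReal.ofReal_le_ofReal
    rcases le_or_gt δ 2 with h1 | h1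
    · rw [max_eq_left (by linarith)]
      nlinarith [sq_nonneg (δ - 1)]
    · rw [max_eq_right (by linarith)]
      nlinarith
  · have h : (1:ℝ≥0∞) = ENNReal.ofReal 1 * truncVar badFun 0 1 1 := by
      rw [truncVar_right (by norm_num), ← ENNReal.ofReal_mul (by norm_num)]
      rw [show max (2-(1:ℝ)) 0 = 1 by norm_num]
      norm_num
    rw [h]
    exact le_iSup_of_le 1 (le_iSup_of_le (by norm_num) le_rfl)

theorem stmt_18 :
    (∀ δ : ℝ, 0 ≤ δ → truncVar badFun (-1) 0 δ = ENNReal.ofReal (max (1 - δ) 0)) ∧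
    (∀ δ : ℝ, 0 ≤ δ → truncVar badFun 0 1 δ = ENNReal.ofReal (max (2 - δ) 0)) ∧
    (∀ δ : ℝ, 0 ≤ δ →
      truncVar badFun (-1) 1 δ = ENNReal.ofReal (max (1 - δ) 0 + max (2 - δ) 0)) ∧
    (⨆ (δ : ℝ) (_ : 0 < δ), ENNReal.ofReal δ * truncVar badFun (-1) 1 δ)
        = ENNReal.ofReal (9 / 8) ∧
    (⨆ (δ : ℝ) (_ : 0 < δ), ENNReal.ofReal δ * truncVar badFun (-1) 0 δ)
        = ENNReal.ofReal (1 / 4) ∧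
    (⨆ (δ : ℝ) (_ : 0 < δ), ENNReal.ofReal δ * truncVar badFun 0 1 δ) = 1 ∧
    (ENNReal.ofReal (9 / 8) < ENNReal.ofReal (1 / 4) + 1) := by
  refine ⟨fun δ hδ => truncVar_left hδ, fun δ hδ => truncVar_right hδ,
    fun δ hδ => truncVar_both hδ, sup_both, sup_left, sup_right, ?_⟩
  rw [← ENNReal.ofReal_one, ← ENNReal.ofReal_add (by norm_num) (by norm_num)]
  rw [ENNReal.ofReal_lt_ofReal_iff (by norm_num)]
  norm_num
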